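/- arXiv:1808.03116 — 2 statements merged into one kernel-verified Lean document; each statement's English description precedes it below -/
import Mathlib

section
/- There is no Lie algebroid bracket on E₀ corresponding to the anchor ρ. Precisely: there exists no ℝ-bilinear, skew-symmetric map L : Γ(E₀) × Γ(E₀) → Γ(E₀) on the module of sections of E₀ that simultaneously satisfies (i) the Leibniz rule L(X, f·Y) = ρ(X)(f)·Y + f·L(X,Y) for all sections X, Y and f ∈ C^∞(ℝ²), (ii) anchor compatibility ρ(L(X,Y)) = [ρ(X), ρ(Y)] (Lie bracket of vector fields on ℝ²), and (iii) the Jacobi identity L(X, L(Y,Z)) + L(Y, L(Z,X)) + L(Z, L(X,Y)) = 0. -/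
noncomputable section

set_option maxHeartbeats 1000000
set_option synthInstance.maxHeartbeats 400000

open Matrix

/-- The ℝ-algebra of smooth (C^∞) functions on ℝ². -/
def Sm : Subalgebra ℝ ((ℝ × ℝ) → ℝ) where
  carrier := {f | ContDiff ℝ (⊤ : ℕ∞) f}
  mul_mem' := fun {a b} (hf : ContDiff ℝ (⊤ : ℕ∞) a) (hg : ContDiff ℝ (⊤ : ℕ∞) b) => hf.mul hg
  add_mem' := fun {a b} (hf : ContDiff ℝ (⊤ : ℕ∞) a) (hg : ContDiff ℝ (⊤ : ℕ∞) b) => hf.add hg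
  algebraMap_mem' r :=
    show ContDiff ℝ (⊤ : ℕ∞) (algebraMap ℝ ((ℝ × ℝ) → ℝ) r) from contDiff_const

/-- Smooth functions on the plane. -/
abbrev S : Type := Sm

lemma mem_Sm_iff {f : (ℝ × ℝ) → ℝ} : f ∈ Sm ↔ ContDiff ℝ (⊤ : ℕ∞) f := by
  rw [Sm]; rfl

lemma smooth_coe (f : S) : ContDiff ℝ (⊤ : ℕ∞) (f : (ℝ × ℝ) → ℝ) := mem_Sm_iff.mp f.2

/-- Sections of the trivial bundle `ℝ² × M₂(ℝ)`, as 2×2 matrices of smooth functions. -/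
abbrev E₀ : Type := Matrix (Fin 2) (Fin 2) S

/-- The section `X_j^i`: the constant elementary matrix with 1 in entry (i,j). -/
def sb (i j : Fin 2) : E₀ := Matrix.single i j 1

/-- First coordinate function. -/
def x₁ : S := ⟨fun p => p.1, mem_Sm_iff.mpr contDiff_fst⟩
/-- Second coordinate function. -/
def x₂ : S := ⟨fun p => p.2, mem_Sm_iff.mpr contDiff_snd⟩
/-- Coordinates. -/
def xc : Fin 2 → S := ![x₁, x₂]

/-- Directional derivative of a smooth function, in direction `v`. -/
def pdAux (v : ℝ × ℝ) (f : S) : S :=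
  ⟨fun p => fderiv ℝ (f : (ℝ × ℝ) → ℝ) p v,
    mem_Sm_iff.mpr (((smooth_coe f).fderiv_right (le_refl _)).clm_apply contDiff_const)⟩

/-- The vector field (derivation) `∂/∂v` on `ℝ²`. -/
def pd (v : ℝ × ℝ) : Derivation ℝ S S where
  toFun := pdAux v
  map_add' f g := by
    ext p
    have hf : DifferentiableAt ℝ (f : (ℝ × ℝ) → ℝ) p :=
      ((smooth_coe f).differentiable (by simp)).differentiableAt
    have hg : DifferentiableAt ℝ (g : (ℝ × ℝ) → ℝ) p :=
      ((smooth_coe g).differentiable (by simp)).differentiableAt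
    have h1 : ((f + g : S) : (ℝ × ℝ) → ℝ) = fun q => (f : (ℝ × ℝ) → ℝ) q + (g : (ℝ × ℝ) → ℝ) q := rfl
    simp only [pdAux, h1, AddMemClass.coe_add, Pi.add_apply]
    rw [fderiv_fun_add hf hg]
    simp
  map_smul' c f := by
    ext p
    have h1 : ((c • f : S) : (ℝ × ℝ) → ℝ) = fun q => c * (f : (ℝ × ℝ) → ℝ) q := rfl
    have hf : DifferentiableAt ℝ (f : (ℝ × ℝ) → ℝ) p :=
      ((smooth_coe f).differentiable (by simp)).differentiableAt
    simp only [pdAux]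
    rw [h1, fderiv_const_mul hf]
    simp
  map_one_eq_zero' := by
    ext p
    have h1 : ((1 : S) : (ℝ × ℝ) → ℝ) = fun _ => (1 : ℝ) := rfl
    have h2 : fderiv ℝ (1 : (ℝ × ℝ) → ℝ) p = 0 := fderiv_const_apply 1
    simp [pdAux, h1, h2]
  leibniz' f g := by
    ext p
    have hf : DifferentiableAt ℝ (f : (ℝ × ℝ) → ℝ) p :=
      ((smooth_coe f).differentiable (by simp)).differentiableAt
    have hg : DifferentiableAt ℝ (g : (ℝ × ℝ) → ℝ) p :=
      ((smooth_coe g).differentiable (by simp)).differentiableAt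
    have h1 : ((f * g : S) : (ℝ × ℝ) → ℝ) = fun q => (f : (ℝ × ℝ) → ℝ) q * (g : (ℝ × ℝ) → ℝ) q := rfl
    simp [pdAux, h1, fderiv_fun_mul hf hg]
    try ring

/-- Standard basis vectors of ℝ². -/
def ev : Fin 2 → ℝ × ℝ := ![(1, 0), (0, 1)]

/-- The anchor `ρ` of `E₀`: `ρ(X_j^i) = (x^i)² ∂/∂x^j`, extended `C^∞(ℝ²)`-linearly. -/
def anchor (X : E₀) : Derivation ℝ S S :=
  ∑ i : Fin 2, ∑ j : Fin 2, (X i j * xc i ^ 2) • pd (ev j)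

/-- The section `𝒳₁ = (x²)² X₁¹ − (x¹)² X₁²`. -/
def 𝓧₁ : E₀ := x₂ ^ 2 • sb 0 0 - x₁ ^ 2 • sb 1 0
/-- The section `𝒳₂ = (x²)² X₂¹ − (x¹)² X₂²`. -/
def 𝓧₂ : E₀ := x₂ ^ 2 • sb 0 1 - x₁ ^ 2 • sb 1 1

/-- The almost Lie bracket axioms for `(E₀, ρ)`, together with the defining values
`[X_j^i, X_l^k] = 2x^k δ_j^k X_l^i − 2x^i δ_l^i X_j^k` on the generators: ℝ-bilinearity,
skew-symmetry, the Leibniz rule, and the values on generators. -/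
def IsBracket (L : E₀ → E₀ → E₀) : Prop :=
  (∀ X X' Y, L (X + X') Y = L X Y + L X' Y) ∧
  (∀ X Y Y', L X (Y + Y') = L X Y + L X Y') ∧
  (∀ (c : ℝ) (X Y : E₀), L (c • X) Y = c • L X Y) ∧
  (∀ (c : ℝ) (X Y : E₀), L X (c • Y) = c • L X Y) ∧
  (∀ X Y, L Y X = - L X Y) ∧
  (∀ (f : S) (X Y : E₀), L X (f • Y) = anchor X f • Y + f • L X Y) ∧
  (∀ i j k l, L (sb i j) (sb k l) =
    (if j = k then (2 : S) * xc k else 0) • sb i l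
      - (if l = i then (2 : S) * xc i else 0) • sb k j)


/-! ### Auxiliary machinery -/

abbrev pd1 : Derivation ℝ S S := pd (ev 0)
abbrev pd2 : Derivation ℝ S S := pd (ev 1)

/-- Evaluation at the origin. -/
def e0 (f : S) : ℝ := (f : (ℝ × ℝ) → ℝ) (0, 0)

lemma e0_add (f g : S) : e0 (f + g) = e0 f + e0 g := rfl
lemma e0_sub (f g : S) : e0 (f - g) = e0 f - e0 g := rfl
lemma e0_mul (f g : S) : e0 (f * g) = e0 f * e0 g := rfl
lemma e0_neg (f : S) : e0 (-f) = - e0 f := rfl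
lemma e0_zero : e0 0 = 0 := rfl
lemma e0_one : e0 1 = 1 := rfl
lemma e0_xc0 : e0 (xc 0) = 0 := rfl
lemma e0_xc1 : e0 (xc 1) = 0 := rfl

lemma pd_coe (v : ℝ × ℝ) (f : S) (p : ℝ × ℝ) :
    ((pd v f : S) : (ℝ × ℝ) → ℝ) p = fderiv ℝ (f : (ℝ × ℝ) → ℝ) p v := rfl

lemma ev0 : ev 0 = (1, 0) := rfl
lemma ev1 : ev 1 = (0, 1) := rfl

lemma xc0_coe : ((xc 0 : S) : (ℝ × ℝ) → ℝ) = fun p => p.1 := rfl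
lemma xc1_coe : ((xc 1 : S) : (ℝ × ℝ) → ℝ) = fun p => p.2 := rfl

lemma pd1_xc0 : pd1 (xc 0) = 1 := by
  apply Subtype.ext
  funext p
  show fderiv ℝ (fun q : ℝ × ℝ => q.1) p (ev 0) = 1
  rw [ev0]
  rw [show (fun q : ℝ × ℝ => q.1) = Prod.fst from rfl, fderiv_fst]
  rfl

lemma pd1_xc1 : pd1 (xc 1) = 0 := by
  apply Subtype.ext
  funext p
  show fderiv ℝ (fun q : ℝ × ℝ => q.2) p (ev 0) = 0
  rw [ev0, show (fun q : ℝ × ℝ => q.2) = Prod.snd from rfl, fderiv_snd]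
  rfl

lemma pd2_xc0 : pd2 (xc 0) = 0 := by
  apply Subtype.ext
  funext p
  show fderiv ℝ (fun q : ℝ × ℝ => q.1) p (ev 1) = 0
  rw [ev1, show (fun q : ℝ × ℝ => q.1) = Prod.fst from rfl, fderiv_fst]
  rfl

lemma pd2_xc1 : pd2 (xc 1) = 1 := by
  apply Subtype.ext
  funext p
  show fderiv ℝ (fun q : ℝ × ℝ => q.2) p (ev 1) = 1
  rw [ev1, show (fun q : ℝ × ℝ => q.2) = Prod.snd from rfl, fderiv_snd]
  rfl
/-- ∂₁ at the origin. -/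
def d1 (f : S) : ℝ := e0 (pd1 f)

/-- The functional `f ↦ ∂₁∂₁ f (0,0)`. -/
def phi (f : S) : ℝ := e0 (pd1 (pd1 f))

lemma d1_add (f g : S) : d1 (f + g) = d1 f + d1 g := by
  unfold d1; rw [map_add, e0_add]
lemma d1_sub (f g : S) : d1 (f - g) = d1 f - d1 g := by
  unfold d1; rw [map_sub, e0_sub]
lemma d1_zero : d1 0 = 0 := by unfold d1; rw [map_zero]; rfl
lemma d1_neg (f : S) : d1 (-f) = - d1 f := by unfold d1; rw [map_neg, e0_neg]
lemma d1_xc0 : d1 (xc 0) = 1 := by unfold d1; rw [pd1_xc0]; rfl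
lemma d1_xc1 : d1 (xc 1) = 0 := by unfold d1; rw [pd1_xc1]; rfl

lemma phi_add (f g : S) : phi (f + g) = phi f + phi g := by
  unfold phi; rw [map_add, map_add, e0_add]
lemma phi_neg (f : S) : phi (-f) = - phi f := by
  unfold phi; rw [map_neg, map_neg, e0_neg]
lemma phi_zero : phi 0 = 0 := by unfold phi; rw [map_zero, map_zero]; rfl

lemma smul_S (f g : S) : f • g = f * g := rfl

lemma pd1_mul (f g : S) : pd1 (f * g) = f * pd1 g + g * pd1 f := by
  rw [Derivation.leibniz, smul_S, smul_S]

lemma pd2_mul (f g : S) : pd2 (f * g) = f * pd2 g + g * pd2 f := by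
  rw [Derivation.leibniz, smul_S, smul_S]

lemma d1_mul (f g : S) : d1 (f * g) = e0 f * d1 g + e0 g * d1 f := by
  unfold d1; rw [pd1_mul, e0_add, e0_mul, e0_mul]

lemma phi_mul (f g : S) :
    phi (f * g) = e0 f * phi g + e0 g * phi f + 2 * (d1 f * d1 g) := by
  unfold phi d1
  rw [pd1_mul, map_add, pd1_mul, pd1_mul, e0_add, e0_add, e0_add, e0_mul, e0_mul,
    e0_mul, e0_mul]
  ring

lemma pd1_sq0 : pd1 (xc 0 ^ 2) = xc 0 + xc 0 := by
  rw [sq, pd1_mul, pd1_xc0]; ring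
lemma pd1_sq1 : pd1 (xc 1 ^ 2) = 0 := by
  rw [sq, pd1_mul, pd1_xc1]; ring
lemma pd2_sq0 : pd2 (xc 0 ^ 2) = 0 := by
  rw [sq, pd2_mul, pd2_xc0]; ring
lemma pd2_sq1 : pd2 (xc 1 ^ 2) = xc 1 + xc 1 := by
  rw [sq, pd2_mul, pd2_xc1]; ring

lemma e0_sq0 : e0 (xc 0 ^ 2) = 0 := by rw [sq, e0_mul, e0_xc0]; ring
lemma e0_sq1 : e0 (xc 1 ^ 2) = 0 := by rw [sq, e0_mul, e0_xc1]; ring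
lemma d1_sq0 : d1 (xc 0 ^ 2) = 0 := by
  unfold d1; rw [pd1_sq0, e0_add, e0_xc0]; ring
lemma d1_sq1 : d1 (xc 1 ^ 2) = 0 := by unfold d1; rw [pd1_sq1]; rfl
lemma phi_sq0 : phi (xc 0 ^ 2) = 2 := by
  unfold phi; rw [pd1_sq0, map_add, pd1_xc0, e0_add, e0_one]; norm_num
lemma phi_sq1 : phi (xc 1 ^ 2) = 0 := by
  unfold phi; rw [pd1_sq1, map_zero]; rfl

lemma phi_x0sq_mul (g : S) : phi (xc 0 ^ 2 * g) = 2 * e0 g := by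
  rw [phi_mul, e0_sq0, d1_sq0, phi_sq0]; ring
lemma phi_x1sq_mul (g : S) : phi (xc 1 ^ 2 * g) = 0 := by
  rw [phi_mul, e0_sq1, d1_sq1, phi_sq1]; ring

/-- unfolded formula for the anchor applied to a function. -/
lemma anchor_apply (X : E₀) (f : S) :
    anchor X f = X 0 0 * xc 0 ^ 2 * pd1 f + X 0 1 * xc 0 ^ 2 * pd2 f
      + X 1 0 * xc 1 ^ 2 * pd1 f + X 1 1 * xc 1 ^ 2 * pd2 f := by
  show (∑ i : Fin 2, ∑ j : Fin 2, (X i j * xc i ^ 2) • pd (ev j)) f = _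
  rw [Fin.sum_univ_two, Fin.sum_univ_two, Fin.sum_univ_two]
  rw [Derivation.add_apply, Derivation.add_apply, Derivation.add_apply,
    Derivation.smul_apply, Derivation.smul_apply, Derivation.smul_apply,
    Derivation.smul_apply, smul_S, smul_S, smul_S, smul_S]
  ring

lemma anchor_coord0 (V : E₀) :
    anchor V (xc 0) = xc 0 ^ 2 * V 0 0 + xc 1 ^ 2 * V 1 0 := by
  rw [anchor_apply, pd1_xc0, pd2_xc0]; ring

lemma anchor_coord1 (V : E₀) :
    anchor V (xc 1) = xc 0 ^ 2 * V 0 1 + xc 1 ^ 2 * V 1 1 := by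
  rw [anchor_apply, pd1_xc1, pd2_xc1]; ring

lemma sb_entry (i j k l : Fin 2) :
    sb i j k l = if i = k ∧ j = l then (1 : S) else 0 := rfl

lemma anchor_sb00 (f : S) : anchor (sb 0 0) f = xc 0 ^ 2 * pd1 f := by
  rw [anchor_apply]; simp [sb_entry]
lemma anchor_sb01 (f : S) : anchor (sb 0 1) f = xc 0 ^ 2 * pd2 f := by
  rw [anchor_apply]; simp [sb_entry]
lemma anchor_sb10 (f : S) : anchor (sb 1 0) f = xc 1 ^ 2 * pd1 f := by
  rw [anchor_apply]; simp [sb_entry]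
lemma anchor_sb11 (f : S) : anchor (sb 1 1) f = xc 1 ^ 2 * pd2 f := by
  rw [anchor_apply]; simp [sb_entry]
lemma cont_coe (f : S) : Continuous (f : (ℝ × ℝ) → ℝ) :=
  (smooth_coe f).continuous

lemma diffAt_coe (f : S) (p : ℝ × ℝ) :
    DifferentiableAt ℝ (f : (ℝ × ℝ) → ℝ) p :=
  ((smooth_coe f).differentiable (by simp)).differentiableAt

/-- derivative of a horizontal slice. -/
lemma hasDerivAt_slice1 (f : S) (x y : ℝ) :
    HasDerivAt (fun t => (f : (ℝ × ℝ) → ℝ) (t, y))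
      ((pd1 f : (ℝ × ℝ) → ℝ) (x, y)) x := by
  have hline : HasDerivAt (fun t : ℝ => ((t, y) : ℝ × ℝ)) ((1 : ℝ), (0 : ℝ)) x :=
    (hasDerivAt_id x).prodMk (hasDerivAt_const x y)
  have h := ((diffAt_coe f (x, y)).hasFDerivAt).comp_hasDerivAt x hline
  exact h

/-- derivative of a vertical slice. -/
lemma hasDerivAt_slice2 (f : S) (x y : ℝ) :
    HasDerivAt (fun t => (f : (ℝ × ℝ) → ℝ) (x, t))
      ((pd2 f : (ℝ × ℝ) → ℝ) (x, y)) y := by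
  have hline : HasDerivAt (fun t : ℝ => ((x, t) : ℝ × ℝ)) ((0 : ℝ), (1 : ℝ)) y :=
    (hasDerivAt_const y x).prodMk (hasDerivAt_id y)
  have h := ((diffAt_coe f (x, y)).hasFDerivAt).comp_hasDerivAt y hline
  exact h

/-- The key jet facts for sections of the kernel of the anchor. -/
lemma kfacts (k₁ k₂ : S) (h : xc 0 ^ 2 * k₁ + xc 1 ^ 2 * k₂ = 0) :
    e0 k₁ = 0 ∧ e0 k₂ = 0 ∧ d1 k₁ = 0 ∧ d1 k₂ = 0 ∧ e0 (pd2 k₂) = 0 := by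
  have hp : ∀ p : ℝ × ℝ,
      p.1 ^ 2 * (k₁ : (ℝ × ℝ) → ℝ) p + p.2 ^ 2 * (k₂ : (ℝ × ℝ) → ℝ) p = 0 :=
    fun p => congrFun (congrArg Subtype.val h) p
  -- k₁ vanishes on the x-axis
  have hx : (fun x : ℝ => (k₁ : (ℝ × ℝ) → ℝ) (x, 0)) = fun _ => 0 := by
    apply Continuous.ext_on (dense_compl_singleton (0 : ℝ))
    · exact (cont_coe k₁).comp (continuous_id.prodMk continuous_const)
    · exact continuous_const
    · intro x hx0
      have hx2 : x ^ 2 ≠ 0 := pow_ne_zero 2 hx0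
      have h0 : x ^ 2 * (k₁ : (ℝ × ℝ) → ℝ) (x, 0) = 0 := by
        have := hp (x, 0); simp only at this; linarith [this]
      have := (mul_eq_zero.mp h0).resolve_left hx2
      simpa using this
  -- k₂ vanishes on the y-axis
  have hy : (fun y : ℝ => (k₂ : (ℝ × ℝ) → ℝ) (0, y)) = fun _ => 0 := by
    apply Continuous.ext_on (dense_compl_singleton (0 : ℝ))
    · exact (cont_coe k₂).comp (continuous_const.prodMk continuous_id)
    · exact continuous_const
    · intro y hy0
      have hy2 : y ^ 2 ≠ 0 := pow_ne_zero 2 hy0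
      have h0 : y ^ 2 * (k₂ : (ℝ × ℝ) → ℝ) (0, y) = 0 := by
        have := hp (0, y); simp only at this; linarith [this]
      have := (mul_eq_zero.mp h0).resolve_left hy2
      simpa using this
  have he1 : e0 k₁ = 0 := congrFun hx 0
  have he2 : e0 k₂ = 0 := congrFun hy 0
  -- d1 k₁ = 0
  have hd1 : d1 k₁ = 0 := by
    have h1 : HasDerivAt (fun x : ℝ => (k₁ : (ℝ × ℝ) → ℝ) (x, 0))
        ((pd1 k₁ : (ℝ × ℝ) → ℝ) (0, 0)) 0 := hasDerivAt_slice1 k₁ 0 0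
    have h2 : HasDerivAt (fun x : ℝ => (k₁ : (ℝ × ℝ) → ℝ) (x, 0)) 0 0 := by
      rw [hx]; exact hasDerivAt_const 0 0
    exact h1.unique h2
  -- e0 (pd2 k₂) = 0
  have hd2 : e0 (pd2 k₂) = 0 := by
    have h1 : HasDerivAt (fun y : ℝ => (k₂ : (ℝ × ℝ) → ℝ) (0, y))
        ((pd2 k₂ : (ℝ × ℝ) → ℝ) (0, 0)) 0 := hasDerivAt_slice2 k₂ 0 0
    have h2 : HasDerivAt (fun y : ℝ => (k₂ : (ℝ × ℝ) → ℝ) (0, y)) 0 0 := by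
      rw [hy]; exact hasDerivAt_const 0 0
    exact h1.unique h2
  -- the hard fact : d1 k₂ = 0
  have hhard : d1 k₂ = 0 := by
    -- Step A: differentiate the identity along vertical lines
    have hA : ∀ x y : ℝ,
        x ^ 2 * (pd2 k₁ : (ℝ × ℝ) → ℝ) (x, y)
          + (2 * y * (k₂ : (ℝ × ℝ) → ℝ) (x, y)
            + y ^ 2 * (pd2 k₂ : (ℝ × ℝ) → ℝ) (x, y)) = 0 := by
      intro x y
      have hfun : (fun t : ℝ => x ^ 2 * (k₁ : (ℝ × ℝ) → ℝ) (x, t)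
          + t ^ 2 * (k₂ : (ℝ × ℝ) → ℝ) (x, t)) = fun _ => 0 := by
        funext t; exact hp (x, t)
      have hD : HasDerivAt (fun t : ℝ => x ^ 2 * (k₁ : (ℝ × ℝ) → ℝ) (x, t)
          + t ^ 2 * (k₂ : (ℝ × ℝ) → ℝ) (x, t))
          (x ^ 2 * (pd2 k₁ : (ℝ × ℝ) → ℝ) (x, y)
            + ((↑(2:ℕ) * y ^ 1) * (k₂ : (ℝ × ℝ) → ℝ) (x, y)
              + y ^ 2 * (pd2 k₂ : (ℝ × ℝ) → ℝ) (x, y))) y := by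
        exact ((hasDerivAt_slice2 k₁ x y).const_mul (x ^ 2)).add
          ((hasDerivAt_pow 2 y).mul (hasDerivAt_slice2 k₂ x y))
      have hzero : HasDerivAt (fun t : ℝ => x ^ 2 * (k₁ : (ℝ × ℝ) → ℝ) (x, t)
          + t ^ 2 * (k₂ : (ℝ × ℝ) → ℝ) (x, t)) 0 y := by
        rw [hfun]; exact hasDerivAt_const y 0
      have := hD.unique hzero
      push_cast at this
      nlinarith [this]
    -- Step B: differentiate again, at y = 0
    have hB : ∀ x : ℝ,
        x ^ 2 * (pd2 (pd2 k₁) : (ℝ × ℝ) → ℝ) (x, 0)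
          + 2 * (k₂ : (ℝ × ℝ) → ℝ) (x, 0) = 0 := by
      intro x
      have hfun : (fun t : ℝ => x ^ 2 * (pd2 k₁ : (ℝ × ℝ) → ℝ) (x, t)
          + (2 * t * (k₂ : (ℝ × ℝ) → ℝ) (x, t)
            + t ^ 2 * (pd2 k₂ : (ℝ × ℝ) → ℝ) (x, t))) = fun _ => 0 := by
        funext t; exact hA x t
      have hD : HasDerivAt (fun t : ℝ => x ^ 2 * (pd2 k₁ : (ℝ × ℝ) → ℝ) (x, t)
          + (2 * t * (k₂ : (ℝ × ℝ) → ℝ) (x, t)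
            + t ^ 2 * (pd2 k₂ : (ℝ × ℝ) → ℝ) (x, t)))
          (x ^ 2 * (pd2 (pd2 k₁) : (ℝ × ℝ) → ℝ) (x, 0)
            + ((2 * (k₂ : (ℝ × ℝ) → ℝ) (x, 0)
                + 2 * 0 * (pd2 k₂ : (ℝ × ℝ) → ℝ) (x, 0))
              + ((↑(2:ℕ) * (0:ℝ) ^ 1) * (pd2 k₂ : (ℝ × ℝ) → ℝ) (x, 0)
                + (0:ℝ) ^ 2 * (pd2 (pd2 k₂) : (ℝ × ℝ) → ℝ) (x, 0)))) 0 := by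
        refine ((hasDerivAt_slice2 (pd2 k₁) x 0).const_mul (x ^ 2)).add (HasDerivAt.add ?_ ?_)
        · have hmul : HasDerivAt (fun t : ℝ => (2 * t) * (k₂ : (ℝ × ℝ) → ℝ) (x, t))
              (2 * (k₂ : (ℝ × ℝ) → ℝ) (x, 0) + (2 * 0) * (pd2 k₂ : (ℝ × ℝ) → ℝ) (x, 0)) 0 := by
            have hid : HasDerivAt (fun t : ℝ => 2 * t) 2 0 := by
              simpa using (hasDerivAt_id (0:ℝ)).const_mul (2:ℝ)
            exact HasDerivAt.mul hid (hasDerivAt_slice2 k₂ x 0)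
          simpa using hmul
        · exact (hasDerivAt_pow 2 0).mul (hasDerivAt_slice2 (pd2 k₂) x 0)
      have hzero : HasDerivAt (fun t : ℝ => x ^ 2 * (pd2 k₁ : (ℝ × ℝ) → ℝ) (x, t)
          + (2 * t * (k₂ : (ℝ × ℝ) → ℝ) (x, t)
            + t ^ 2 * (pd2 k₂ : (ℝ × ℝ) → ℝ) (x, t))) 0 0 := by
        rw [hfun]; exact hasDerivAt_const 0 0
      have := hD.unique hzero
      push_cast at this
      nlinarith [this]
    -- Step C: conclude via the slope characterization
    set c : ℝ → ℝ := fun x => (pd2 (pd2 k₁) : (ℝ × ℝ) → ℝ) (x, 0) with hc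
    have hccont : Continuous c :=
      (cont_coe (pd2 (pd2 k₁))).comp (continuous_id.prodMk continuous_const)
    have hg0 : ∀ x : ℝ, (k₂ : (ℝ × ℝ) → ℝ) (x, 0) = -(x ^ 2 * c x) / 2 := by
      intro x; have := hB x; rw [hc]; linarith [this]
    have hslope : HasDerivAt (fun x : ℝ => (k₂ : (ℝ × ℝ) → ℝ) (x, 0)) 0 0 := by
      rw [hasDerivAt_iff_tendsto_slope]
      have htend : Filter.Tendsto (fun x : ℝ => -(x * c x) / 2) (nhds 0) (nhds 0) := by
        have hcont2 : Continuous (fun x : ℝ => -(x * c x) / 2) := by continuity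
        have := hcont2.tendsto 0
        simpa using this
      apply Filter.Tendsto.congr' ?_ (htend.mono_left nhdsWithin_le_nhds)
      filter_upwards [self_mem_nhdsWithin] with x hx0
      have hx0' : (x : ℝ) ≠ 0 := hx0
      rw [slope_def_field, hg0 x, hg0 0]
      field_simp
      ring
    have h1 : HasDerivAt (fun x : ℝ => (k₂ : (ℝ × ℝ) → ℝ) (x, 0))
        ((pd1 k₂ : (ℝ × ℝ) → ℝ) (0, 0)) 0 := hasDerivAt_slice1 k₂ 0 0
    exact h1.unique hslope
  exact ⟨he1, he2, hd1, hhard, hd2⟩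
lemma colFacts (v₀ v₁ b₀ b₁ : S)
    (h : xc 0 ^ 2 * v₀ + xc 1 ^ 2 * v₁ = xc 0 ^ 2 * b₀ + xc 1 ^ 2 * b₁) :
    e0 v₀ = e0 b₀ ∧ e0 v₁ = e0 b₁ ∧ d1 v₀ = d1 b₀ ∧ d1 v₁ = d1 b₁ ∧
      e0 (pd2 v₁) = e0 (pd2 b₁) := by
  have h' : xc 0 ^ 2 * (v₀ - b₀) + xc 1 ^ 2 * (v₁ - b₁) = 0 := by
    linear_combination h
  obtain ⟨h1, h2, h3, h4, h5⟩ := kfacts _ _ h'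
  rw [e0_sub] at h1 h2
  rw [d1_sub] at h3 h4
  rw [map_sub, e0_sub] at h5
  exact ⟨by linarith, by linarith, by linarith, by linarith, by linarith⟩
lemma e0_pd1 (f : S) : e0 (pd1 f) = d1 f := rfl

/-- there is no Lie algebroid bracket on `E₀` corresponding to the anchor `ρ`:
no ℝ-bilinear skew-symmetric map on sections satisfying the Leibniz rule, anchor
compatibility and the Jacobi identity. -/
theorem statement5 :
    ¬ ∃ L : E₀ → E₀ → E₀,
      (∀ X X' Y, L (X + X') Y = L X Y + L X' Y) ∧
      (∀ X Y Y', L X (Y + Y') = L X Y + L X Y') ∧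
      (∀ (c : ℝ) (X Y : E₀), L (c • X) Y = c • L X Y) ∧
      (∀ (c : ℝ) (X Y : E₀), L X (c • Y) = c • L X Y) ∧
      (∀ X Y, L Y X = - L X Y) ∧
      (∀ (f : S) (X Y : E₀), L X (f • Y) = anchor X f • Y + f • L X Y) ∧
      (∀ X Y, anchor (L X Y) = ⁅anchor X, anchor Y⁆) ∧
      (∀ X Y Z, L X (L Y Z) + L Y (L Z X) + L Z (L X Y) = 0) := by
  rintro ⟨L, hadd1, hadd2, hsmul1, hsmul2, hskew, hleib, hanch, hjac⟩
  -- diagonal brackets vanish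
  have hdiag : ∀ X : E₀, L X X = 0 := by
    intro X
    have h := hskew X X
    have h2 : L X X + L X X = 0 := by
      nth_rewrite 2 [h]; exact add_neg_cancel _
    have h3 : (2 : ℝ) • L X X = 0 := by rw [two_smul]; exact h2
    have := congrArg (fun M : E₀ => ((2 : ℝ)⁻¹) • M) h3
    simpa [smul_smul] using this
  -- the entry (1,1) expansion of L X W
  have expand : ∀ X W : E₀, (L X W) 1 1 =
      anchor X (W 1 1)
        + (W 0 0 * (L X (sb 0 0)) 1 1 + W 0 1 * (L X (sb 0 1)) 1 1
          + W 1 0 * (L X (sb 1 0)) 1 1 + W 1 1 * (L X (sb 1 1)) 1 1) := by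
    intro X W
    have hdecomp : W = W 0 0 • sb 0 0 + (W 0 1 • sb 0 1
        + (W 1 0 • sb 1 0 + W 1 1 • sb 1 1)) := by
      ext i j
      fin_cases i <;> fin_cases j <;>
        simp [sb_entry, Matrix.add_apply, Matrix.smul_apply, smul_S]
    have e1 : L X W = L X (W 0 0 • sb 0 0 + (W 0 1 • sb 0 1
        + (W 1 0 • sb 1 0 + W 1 1 • sb 1 1))) := congrArg (L X) hdecomp
    rw [hadd2, hadd2, hadd2, hleib, hleib, hleib, hleib] at e1
    have e2 := congrArg (fun M : E₀ => M 1 1) e1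
    simp only [Matrix.add_apply, Matrix.smul_apply, smul_S, sb_entry] at e2
    norm_num at e2
    rw [e2]; ring
  -- named unknown brackets
  set W1 : E₀ := L (sb 0 1) (sb 1 0) with hW1
  set W2 : E₀ := L (sb 1 0) (sb 0 0) with hW2
  set W3 : E₀ := L (sb 0 0) (sb 0 1) with hW3
  set Q1 : E₀ := L (sb 0 0) (sb 1 1) with hQ1
  set P1 : E₀ := L (sb 0 1) (sb 1 1) with hP1
  set P2 : E₀ := L (sb 1 0) (sb 1 1) with hP2
  -- anchor identities, per column
  have hanc : ∀ X Y : E₀, ∀ m : Fin 2, anchor (L X Y) (xc m)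
      = anchor X (anchor Y (xc m)) - anchor Y (anchor X (xc m)) := by
    intro X Y m
    rw [hanch X Y, Derivation.commutator_apply]
  -- W1 columns
  have hW1c0 : xc 0 ^ 2 * W1 0 0 + xc 1 ^ 2 * W1 1 0
      = xc 0 ^ 2 * (xc 1 + xc 1) + xc 1 ^ 2 * 0 := by
    have h0 := hanc (sb 0 1) (sb 1 0) 0
    simp only [anchor_sb00, anchor_sb01, anchor_sb10, anchor_sb11] at h0
    rw [anchor_coord0] at h0
    simp only [pd1_xc0, pd1_xc1, pd2_xc0, pd2_xc1, mul_one, mul_zero, map_zero,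
      pd1_sq0, pd1_sq1, pd2_sq0, pd2_sq1, sub_zero, zero_sub] at h0
    linear_combination h0
  have hW1c1 : xc 0 ^ 2 * W1 0 1 + xc 1 ^ 2 * W1 1 1
      = xc 0 ^ 2 * 0 + xc 1 ^ 2 * (-(xc 0 + xc 0)) := by
    have h0 := hanc (sb 0 1) (sb 1 0) 1
    simp only [anchor_sb00, anchor_sb01, anchor_sb10, anchor_sb11] at h0
    rw [anchor_coord1] at h0
    simp only [pd1_xc0, pd1_xc1, pd2_xc0, pd2_xc1, mul_one, mul_zero, map_zero,
      pd1_sq0, pd1_sq1, pd2_sq0, pd2_sq1, sub_zero, zero_sub] at h0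
    linear_combination h0
  -- W2 columns
  have hW2c0 : xc 0 ^ 2 * W2 0 0 + xc 1 ^ 2 * W2 1 0
      = xc 0 ^ 2 * 0 + xc 1 ^ 2 * (xc 0 + xc 0) := by
    have h0 := hanc (sb 1 0) (sb 0 0) 0
    simp only [anchor_sb00, anchor_sb01, anchor_sb10, anchor_sb11] at h0
    rw [anchor_coord0] at h0
    simp only [pd1_xc0, pd1_xc1, pd2_xc0, pd2_xc1, mul_one, mul_zero, map_zero,
      pd1_sq0, pd1_sq1, pd2_sq0, pd2_sq1, sub_zero, zero_sub] at h0
    linear_combination h0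
  have hW2c1 : xc 0 ^ 2 * W2 0 1 + xc 1 ^ 2 * W2 1 1
      = xc 0 ^ 2 * 0 + xc 1 ^ 2 * 0 := by
    have h0 := hanc (sb 1 0) (sb 0 0) 1
    simp only [anchor_sb00, anchor_sb01, anchor_sb10, anchor_sb11] at h0
    rw [anchor_coord1] at h0
    simp only [pd1_xc0, pd1_xc1, pd2_xc0, pd2_xc1, mul_one, mul_zero, map_zero,
      pd1_sq0, pd1_sq1, pd2_sq0, pd2_sq1, sub_zero, zero_sub] at h0
    linear_combination h0
  -- W3 columns
  have hW3c0 : xc 0 ^ 2 * W3 0 0 + xc 1 ^ 2 * W3 1 0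
      = xc 0 ^ 2 * 0 + xc 1 ^ 2 * 0 := by
    have h0 := hanc (sb 0 0) (sb 0 1) 0
    simp only [anchor_sb00, anchor_sb01, anchor_sb10, anchor_sb11] at h0
    rw [anchor_coord0] at h0
    simp only [pd1_xc0, pd1_xc1, pd2_xc0, pd2_xc1, mul_one, mul_zero, map_zero,
      pd1_sq0, pd1_sq1, pd2_sq0, pd2_sq1, sub_zero, zero_sub] at h0
    linear_combination h0
  have hW3c1 : xc 0 ^ 2 * W3 0 1 + xc 1 ^ 2 * W3 1 1
      = xc 0 ^ 2 * (xc 0 + xc 0) + xc 1 ^ 2 * 0 := by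
    have h0 := hanc (sb 0 0) (sb 0 1) 1
    simp only [anchor_sb00, anchor_sb01, anchor_sb10, anchor_sb11] at h0
    rw [anchor_coord1] at h0
    simp only [pd1_xc0, pd1_xc1, pd2_xc0, pd2_xc1, mul_one, mul_zero, map_zero,
      pd1_sq0, pd1_sq1, pd2_sq0, pd2_sq1, sub_zero, zero_sub] at h0
    linear_combination h0
  -- Q1 column 1
  have hQ1c1 : xc 0 ^ 2 * Q1 0 1 + xc 1 ^ 2 * Q1 1 1
      = xc 0 ^ 2 * 0 + xc 1 ^ 2 * 0 := by
    have h0 := hanc (sb 0 0) (sb 1 1) 1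
    simp only [anchor_sb00, anchor_sb01, anchor_sb10, anchor_sb11] at h0
    rw [anchor_coord1] at h0
    simp only [pd1_xc0, pd1_xc1, pd2_xc0, pd2_xc1, mul_one, mul_zero, map_zero,
      pd1_sq0, pd1_sq1, pd2_sq0, pd2_sq1, sub_zero, zero_sub] at h0
    linear_combination h0
  -- P1 column 1
  have hP1c1 : xc 0 ^ 2 * P1 0 1 + xc 1 ^ 2 * P1 1 1
      = xc 0 ^ 2 * (xc 1 + xc 1) + xc 1 ^ 2 * 0 := by
    have h0 := hanc (sb 0 1) (sb 1 1) 1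
    simp only [anchor_sb00, anchor_sb01, anchor_sb10, anchor_sb11] at h0
    rw [anchor_coord1] at h0
    simp only [pd1_xc0, pd1_xc1, pd2_xc0, pd2_xc1, mul_one, mul_zero, map_zero,
      pd1_sq0, pd1_sq1, pd2_sq0, pd2_sq1, sub_zero, zero_sub] at h0
    linear_combination h0
  -- P2 column 1
  have hP2c1 : xc 0 ^ 2 * P2 0 1 + xc 1 ^ 2 * P2 1 1
      = xc 0 ^ 2 * 0 + xc 1 ^ 2 * 0 := by
    have h0 := hanc (sb 1 0) (sb 1 1) 1
    simp only [anchor_sb00, anchor_sb01, anchor_sb10, anchor_sb11] at h0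
    rw [anchor_coord1] at h0
    simp only [pd1_xc0, pd1_xc1, pd2_xc0, pd2_xc1, mul_one, mul_zero, map_zero,
      pd1_sq0, pd1_sq1, pd2_sq0, pd2_sq1, sub_zero, zero_sub] at h0
    linear_combination h0
  -- extract jet facts
  obtain ⟨eW100, eW110, dW100, dW110, -⟩ := colFacts _ _ _ _ hW1c0
  obtain ⟨eW101, eW111, dW101, dW111, -⟩ := colFacts _ _ _ _ hW1c1
  obtain ⟨eW200, eW210, dW200, dW210, -⟩ := colFacts _ _ _ _ hW2c0
  obtain ⟨eW201, eW211, dW201, dW211, p2W211⟩ := colFacts _ _ _ _ hW2c1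
  obtain ⟨eW300, eW310, dW300, dW310, -⟩ := colFacts _ _ _ _ hW3c0
  obtain ⟨eW301, eW311, dW301, dW311, -⟩ := colFacts _ _ _ _ hW3c1
  obtain ⟨-, eQ111, -, dQ111, -⟩ := colFacts _ _ _ _ hQ1c1
  obtain ⟨-, eP111, -, dP111, -⟩ := colFacts _ _ _ _ hP1c1
  obtain ⟨-, eP211, -, dP211, -⟩ := colFacts _ _ _ _ hP2c1
  -- evaluate explicit right-hand sides
  have ebase : e0 (xc 1 + xc 1) = 0 := by rw [e0_add, e0_xc1]; ring
  have ebase0 : e0 (xc 0 + xc 0) = 0 := by rw [e0_add, e0_xc0]; ring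
  have ebasen : e0 (-(xc 0 + xc 0)) = 0 := by rw [e0_neg, ebase0]; ring
  have dbase1 : d1 (xc 1 + xc 1) = 0 := by rw [d1_add, d1_xc1]; ring
  have dbase0 : d1 (xc 0 + xc 0) = 2 := by rw [d1_add, d1_xc0]; ring
  have dbasen : d1 (-(xc 0 + xc 0)) = -2 := by rw [d1_neg, dbase0]
  have pzero : e0 (pd2 (0 : S)) = 0 := by rw [map_zero, e0_zero]
  rw [ebase] at eW100
  rw [e0_zero] at eW110 eW101 eW200 eW201 eW211 eW300 eW310 eW311 eQ111 eP111 eP211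
  rw [ebasen] at eW111
  rw [ebase0] at eW210 eW301
  rw [dbase1] at dW100
  rw [d1_zero] at dW110 dW101 dW200 dW201 dW211 dW300 dW310 dW311 dQ111 dP111 dP211
  rw [dbasen] at dW111
  rw [dbase0] at dW210 dW301
  rw [pzero] at p2W211
  -- apply the Jacobi identity and the functional phi
  have hj := hjac (sb 0 0) (sb 0 1) (sb 1 0)
  have h00 := congrArg (fun M : E₀ => phi (M 1 1)) hj
  simp only [Matrix.add_apply, Matrix.zero_apply] at h00
  rw [expand (sb 0 0) (L (sb 0 1) (sb 1 0)), expand (sb 0 1) (L (sb 1 0) (sb 0 0)),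
    expand (sb 1 0) (L (sb 0 0) (sb 0 1))] at h00
  rw [hdiag (sb 0 0), hdiag (sb 0 1), hdiag (sb 1 0)] at h00
  rw [hskew (sb 1 0) (sb 0 0), hskew (sb 0 0) (sb 0 1), hskew (sb 0 1) (sb 1 0)] at h00
  rw [anchor_sb00, anchor_sb01, anchor_sb10] at h00
  simp only [Matrix.neg_apply, Matrix.zero_apply, mul_zero, mul_neg, phi_add, phi_neg,
    phi_zero, phi_mul, e0_pd1, e0_neg, d1_neg, e0_sq0, e0_sq1, d1_sq0, d1_sq1,
    phi_sq0, phi_sq1] at h00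
  rw [← hW1, ← hW2, ← hW3, ← hQ1, ← hP1, ← hP2] at h00
  simp only [eW100, eW110, eW101, eW111, eW200, eW210, eW201, eW211, eW300, eW310,
    eW301, eW311, eQ111, eP111, eP211, dW100, dW110, dW101, dW111, dW200, dW210,
    dW201, dW211, dW300, dW310, dW301, dW311, dQ111, dP111, dP211, p2W211] at h00
  norm_num at h00
end
end

section
/- Let ∇ be the E₀-connection on E₀ defined on generators by ∇_{X_j^i} X_l^k = 2x^k δ_j^k X_l^i and extended by the Koszul rules (A-linear in the first argument, ∇_X(f·Y) = ρ(X)(f)·Y + f·∇_X Y). Then ∇ is torsion-free with respect to [·,·]_{E₀}, and its curvature R satisfies, on generators: R(X₁¹, X₁²)X₁¹ = −2𝒳₁, R(X₁¹, X₁²)X₂¹ = −2𝒳₂, R(X₂², X₂¹)X₁² = 2𝒳₁, R(X₂², X₂¹)X₂² = 2𝒳₂, together with the values forced by skew-symmetry of R in its first two arguments, while all other components R(X_j^i, X_l^k)X_n^m on generators vanish. -/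
noncomputable section

set_option maxHeartbeats 1000000
set_option synthInstance.maxHeartbeats 400000

open Matrix

/-- The Koszul axioms for an `E₀`-connection on `E₀` (with respect to the anchor `ρ`):
`C^∞(ℝ²)`-linearity in the first argument, additivity in the second argument, and the
Leibniz rule. -/
def IsConn (D : E₀ → E₀ → E₀) : Prop :=
  (∀ X X' Y, D (X + X') Y = D X Y + D X' Y) ∧
  (∀ (f : S) (X Y : E₀), D (f • X) Y = f • D X Y) ∧
  (∀ X Y Y', D X (Y + Y') = D X Y + D X Y') ∧
  (∀ (f : S) (X Y : E₀), D X (f • Y) = anchor X f • Y + f • D X Y)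

/-- The pair of kernel sections `(𝒳₁, 𝒳₂)`. -/
def 𝓧v : Fin 2 → E₀ := ![𝓧₁, 𝓧₂]

/-- The full table of curvature values of the connection `∇_{X_j^i} X_l^k = 2x^k δ_j^k X_l^i`
on generators: the four values listed in the statement, the values forced by
skew-symmetry in the first two arguments, and `0` for all other components. -/
def Rtable (i j k l m n : Fin 2) : E₀ :=
  if i = 0 ∧ j = 0 ∧ k = 1 ∧ l = 0 ∧ m = 0 then (-2 : S) • 𝓧v n
  else if i = 1 ∧ j = 0 ∧ k = 0 ∧ l = 0 ∧ m = 0 then (2 : S) • 𝓧v n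
  else if i = 1 ∧ j = 1 ∧ k = 0 ∧ l = 1 ∧ m = 1 then (2 : S) • 𝓧v n
  else if i = 0 ∧ j = 1 ∧ k = 1 ∧ l = 1 ∧ m = 1 then (-2 : S) • 𝓧v n
  else 0


set_option maxHeartbeats 4000000
set_option synthInstance.maxHeartbeats 1000000

lemma pd_xc (j m : Fin 2) : pd (ev j) (xc m) = if j = m then 1 else 0 := by
  fin_cases j <;> fin_cases m <;>
  · apply Subtype.ext
    funext p
    show fderiv ℝ _ p _ = _
    simp [xc, x₁, x₂, ev]
    first
    | rw [show (fun p : ℝ × ℝ => p.1) = Prod.fst from rfl, fderiv_fst]; simp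
    | rw [show (fun p : ℝ × ℝ => p.2) = Prod.snd from rfl, fderiv_snd]; simp

lemma pd_two_mul (v : ℝ × ℝ) (f : S) : pd v ((2:S) * f) = 2 * pd v f := by
  have h2 : (2:S) = algebraMap ℝ S 2 := (map_ofNat (algebraMap ℝ S) 2).symm
  rw [Derivation.leibniz, h2, Derivation.map_algebraMap]
  simp [smul_eq_mul]

lemma sb_apply (i j a b : Fin 2) : (sb i j) a b = if i = a ∧ j = b then 1 else 0 := by
  simp [sb, Matrix.single]

lemma anchor_sb (i j : Fin 2) (f : S) : anchor (sb i j) f = xc i ^ 2 * pd (ev j) f := by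
  simp only [anchor, Fin.sum_univ_two]
  fin_cases i <;> fin_cases j <;>
    simp [sb_apply, Derivation.add_apply, Derivation.smul_apply, smul_eq_mul]

lemma aux_torsion (L : E₀ → E₀ → E₀) (hL : IsBracket L)
    (D : E₀ → E₀ → E₀) (hD : IsConn D)
    (hDgen : ∀ i j k l, D (sb i j) (sb k l) = (if j = k then (2 : S) * xc k else 0) • sb i l) :
    ∀ X Y : E₀, D X Y - D Y X = L X Y := by
  obtain ⟨hL1, hL2, hL3, hL4, hL5, hL6, hL7⟩ := hL
  obtain ⟨hD1, hD2, hD3, hD4⟩ := hD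
  have decomp : ∀ X : E₀, X = X 0 0 • sb 0 0 + X 0 1 • sb 0 1 + X 1 0 • sb 1 0 + X 1 1 • sb 1 1 := by
    intro X
    ext a b
    fin_cases a <;> fin_cases b <;>
      simp [sb_apply, Matrix.smul_apply, smul_eq_mul]
  have Tz1 : ∀ i j k l : Fin 2,
      D (sb i j) (sb k l) - D (sb k l) (sb i j) - L (sb i j) (sb k l) = 0 := by
    intro i j k l
    rw [hDgen, hDgen, hL7]
    abel
  have TaddR : ∀ X Y Y', D X (Y + Y') - D (Y + Y') X - L X (Y + Y')
      = (D X Y - D Y X - L X Y) + (D X Y' - D Y' X - L X Y') := by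
    intro X Y Y'
    rw [hD3, hD1, hL2]
    abel
  have TsmulR : ∀ (f : S) X Y, D X (f • Y) - D (f • Y) X - L X (f • Y)
      = f • (D X Y - D Y X - L X Y) := by
    intro f X Y
    rw [hD4, hD2, hL6]
    simp only [smul_sub]
    abel
  have kgen : ∀ (k l : Fin 2) (Y : E₀),
      D (sb k l) Y - D Y (sb k l) - L (sb k l) Y = 0 := by
    intro k l Y
    rw [decomp Y, TaddR, TaddR, TaddR, TsmulR, TsmulR, TsmulR, TsmulR]
    simp only [Tz1, smul_zero, add_zero]
  have TaddL : ∀ X X' Y, D (X + X') Y - D Y (X + X') - L (X + X') Y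
      = (D X Y - D Y X - L X Y) + (D X' Y - D Y X' - L X' Y) := by
    intro X X' Y
    rw [hD1, hD3, hL1]
    abel
  have TsmulL : ∀ (f : S) X Y, D (f • X) Y - D Y (f • X) - L (f • X) Y
      = f • (D X Y - D Y X - L X Y) := by
    intro f X Y
    rw [hD2, hD4, hL5 Y (f • X), hL6 f Y X, hL5 X Y]
    simp only [smul_sub, smul_neg]
    abel
  intro X Y
  rw [← sub_eq_zero, decomp X, TaddL, TaddL, TaddL, TsmulL, TsmulL, TsmulL, TsmulL]
  simp only [kgen, smul_zero, add_zero]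

lemma aux_key2 (L : E₀ → E₀ → E₀) (hL : IsBracket L)
    (D : E₀ → E₀ → E₀) (hD : IsConn D)
    (hDgen : ∀ i j k l, D (sb i j) (sb k l) = (if j = k then (2 : S) * xc k else 0) • sb i l)
    (i j k l m n : Fin 2) :
    D (sb i j) (D (sb k l) (sb m n)) - D (sb k l) (D (sb i j) (sb m n))
      - D (L (sb i j) (sb k l)) (sb m n)
    = (xc i ^ 2 * (if l = m ∧ j = m then (2:S) else 0)) • sb k n
      - (xc k ^ 2 * (if j = m ∧ l = m then (2:S) else 0)) • sb i n := by
  obtain ⟨hL1, hL2, hL3, hL4, hL5, hL6, hL7⟩ := hL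
  obtain ⟨hD1, hD2, hD3, hD4⟩ := hD
  have hDsubL : ∀ X Y Z, D (X - Y) Z = D X Z - D Y Z := by
    intro X Y Z
    have h := hD1 (X - Y) Y Z
    rw [sub_add_cancel] at h
    exact eq_sub_of_add_eq h.symm
  have hDf : ∀ (i j k n : Fin 2) (f : S), D (sb i j) (f • sb k n)
      = (xc i ^ 2 * pd (ev j) f) • sb k n
        + (f * (if j = k then (2:S) * xc k else 0)) • sb i n := by
    intro i j k n f
    rw [hD4, hDgen, anchor_sb, smul_smul]
  have pdc : ∀ (j l m : Fin 2), pd (ev j) (if l = m then (2:S) * xc m else 0)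
      = if l = m ∧ j = m then (2:S) else 0 := by
    intro j l m
    by_cases h : l = m
    · simp only [h, if_true, true_and, pd_two_mul, pd_xc, mul_ite, mul_one, mul_zero]
    · simp [h]
  rw [hDgen k l m n, hDgen i j m n, hDf, hDf, hL7, hDsubL, hD2, hD2,
    hDgen i l m n, hDgen k j m n, smul_smul, smul_smul, pdc, pdc,
    mul_comm (if l = m then (2:S) * xc m else 0) (if j = k then (2:S) * xc k else 0),
    mul_comm (if j = m then (2:S) * xc m else 0) (if l = i then (2:S) * xc i else 0)]
  abel

lemma aux_table (i j k l m n : Fin 2) :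
    (xc i ^ 2 * (if l = m ∧ j = m then (2:S) else 0)) • sb k n
      - (xc k ^ 2 * (if j = m ∧ l = m then (2:S) else 0)) • sb i n
    = Rtable i j k l m n := by
  have hXv : ∀ n : Fin 2, 𝓧v n = x₂ ^ 2 • sb 0 n - x₁ ^ 2 • sb 1 n := by
    intro n
    fin_cases n <;> simp [𝓧v, 𝓧₁, 𝓧₂]
  have e1 : ∀ n : Fin 2, (-2 : S) • 𝓧v n
      = (x₁ ^ 2 * 2) • sb 1 n - (x₂ ^ 2 * 2) • sb 0 n := by
    intro n
    rw [hXv]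
    module
  have e2 : ∀ n : Fin 2, (2 : S) • 𝓧v n
      = (x₂ ^ 2 * 2) • sb 0 n - (x₁ ^ 2 * 2) • sb 1 n := by
    intro n
    rw [hXv]
    module
  fin_cases i <;> fin_cases j <;> fin_cases k <;> fin_cases l <;> fin_cases m <;>
    simp [Rtable, e1, e2, xc]

/-- the connection `∇` defined on generators by
`∇_{X_j^i} X_l^k = 2x^k δ_j^k X_l^i` (extended by the Koszul rules) is torsion-free with
respect to `[·,·]_{E₀}`, and its curvature takes on generators exactly the values
`R(X₁¹,X₁²)X₁¹ = −2𝒳₁`, `R(X₁¹,X₁²)X₂¹ = −2𝒳₂`, `R(X₂²,X₂¹)X₁² = 2𝒳₁`,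
`R(X₂²,X₂¹)X₂² = 2𝒳₂`, together with the values forced by skew-symmetry in the first two
arguments, all other components being zero. -/
theorem statement12 (L : E₀ → E₀ → E₀) (hL : IsBracket L)
    (D : E₀ → E₀ → E₀) (hD : IsConn D)
    (hDgen : ∀ i j k l, D (sb i j) (sb k l) = (if j = k then (2 : S) * xc k else 0) • sb i l) :
    (∀ X Y : E₀, D X Y - D Y X = L X Y) ∧
    (∀ i j k l m n : Fin 2,
      D (sb i j) (D (sb k l) (sb m n)) - D (sb k l) (D (sb i j) (sb m n))
        - D (L (sb i j) (sb k l)) (sb m n) = Rtable i j k l m n) := by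
  exact ⟨aux_torsion L hL D hD hDgen,
    fun i j k l m n => (aux_key2 L hL D hD hDgen i j k l m n).trans (aux_table i j k l m n)⟩
end
end
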